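/- Let G be a finite abelian group of order n and Cay(G,S) an integral Cayley graph with all eigenvalues λ_g ∈ ℤ, and fix a ∈ G of order 2, g_1 ∈ G_1, an element z ∈ S with z ≠ 0, a. Define M_0 = gcd(|S| - λ_g : g ∈ G_0), M_1 = gcd(λ_{g_1} - λ_g : g ∈ G_1), M = gcd(M_0, M_1). Then M divides n. -/

import Mathlib

/-- Lemma 2.3: for an integral abelian Cayley graph, the gcd `M` of the
eigenvalue differences `|S| - λ_g` over `G₀` and `λ_{g₁} - λ_g` over `G₁`
divides `n = |G|`. -/
theorem gcd_eigenvalue_differences_dvd_card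
    (G : Type) [AddCommGroup G] [Fintype G] [DecidableEq G]
    (χ : G ≃ AddChar G ℂ)
    (hχmul : ∀ g₁ g₂ x : G, χ (g₁ + g₂) x = χ g₁ x * χ g₂ x)
    (hχ0 : ∀ x : G, χ 0 x = 1)
    (hχsymm : ∀ g h : G, χ g h = χ h g)
    (a : G) (ha : addOrderOf a = 2)
    (S : Finset G) (hS : ∀ s : G, s ∈ S ↔ -s ∈ S)
    (lam : G → ℤ) (hlam : ∀ g : G, ((lam g : ℂ)) = ∑ s ∈ S, χ g s)
    (g₁ : G) (hg₁ : χ a g₁ = -1)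
    (z : G) (hzS : z ∈ S) (hz0 : z ≠ 0) (hza : z ≠ a)
    (M₀ M₁ M : ℤ)
    (hM₀ : M₀ = (Finset.univ.filter (fun g : G => χ a g = 1)).gcd
      (fun g => (S.card : ℤ) - lam g))
    (hM₁ : M₁ = (Finset.univ.filter (fun g : G => χ a g = -1)).gcd
      (fun g => lam g₁ - lam g))
    (hM : M = gcd M₀ M₁) :
    M ∣ (Fintype.card G : ℤ) := by
  classical
  set n := Fintype.card G with hn
  -- sum of a nontrivial character over the group vanishes
  have hsum : ∀ w : G, w ≠ 0 → ∑ g, χ g w = 0 := by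
    intro w hw
    have h1 : (∑ g, χ g w) = ∑ g, χ w g := by
      exact Finset.sum_congr rfl fun g _ => hχsymm g w
    rw [h1]
    refine AddChar.sum_eq_zero_iff_ne_zero.2 ?_
    intro hzero
    apply hw
    have : χ w = χ 0 := by
      rw [hzero]; ext x; rw [hχ0 x]; rfl
    exact χ.injective this
  -- a + a = 0
  have haa : a + a = 0 := by
    have := addOrderOf_nsmul_eq_zero a
    rw [ha] at this
    simpa [two_nsmul] using this
  -- χ a g = ±1
  have hpm : ∀ g : G, χ a g = 1 ∨ χ a g = -1 := by
    intro g
    have h2 : χ a g * χ a g = 1 := by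
      rw [← hχmul, haa, hχ0]
    have : (χ a g - 1) * (χ a g + 1) = 0 := by ring_nf; linear_combination h2
    rcases mul_eq_zero.1 this with h | h
    · left; linear_combination h
    · right; linear_combination h
  -- the two filter sets
  set F₀ := Finset.univ.filter (fun g : G => χ a g = 1) with hF₀
  set F₁ := Finset.univ.filter (fun g : G => χ a g = -1) with hF₁
  have hdisj : Disjoint F₀ F₁ := by
    rw [Finset.disjoint_left]
    intro g h0 h1
    rw [hF₀, Finset.mem_filter] at h0
    rw [hF₁, Finset.mem_filter] at h1
    rw [h0.2] at h1
    norm_num at h1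
  have hunion : F₀ ∪ F₁ = Finset.univ := by
    ext g
    simp only [hF₀, hF₁, Finset.mem_union, Finset.mem_filter, Finset.mem_univ, true_and, iff_true]
    exact hpm g
  -- T₀ = T₁ = 0
  have hsplit : ∀ f : G → ℂ, ∑ g, f g = ∑ g ∈ F₀, f g + ∑ g ∈ F₁, f g := by
    intro f
    rw [← Finset.sum_union hdisj, hunion]
  have hT01 : (∑ g ∈ F₀, χ g (-z)) + ∑ g ∈ F₁, χ g (-z) = 0 := by
    rw [← hsplit]; exact hsum (-z) (neg_ne_zero.2 hz0)
  have hT01' : (∑ g ∈ F₀, χ g (-z)) - ∑ g ∈ F₁, χ g (-z) = 0 := by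
    have key : ∑ g, χ a g * χ g (-z) = 0 := by
      have : ∀ g : G, χ a g * χ g (-z) = χ g (a + -z) := by
        intro g
        rw [AddChar.map_add_eq_mul, hχsymm g a]
      rw [Finset.sum_congr rfl fun g _ => this g]
      exact hsum _ (fun h => hza (add_neg_eq_zero.mp h).symm)
    rw [hsplit (fun g => χ a g * χ g (-z))] at key
    have e0 : ∑ g ∈ F₀, χ a g * χ g (-z) = ∑ g ∈ F₀, χ g (-z) := by
      refine Finset.sum_congr rfl fun g hg => ?_
      rw [(Finset.mem_filter.1 hg).2, one_mul]
    have e1 : ∑ g ∈ F₁, χ a g * χ g (-z) = -∑ g ∈ F₁, χ g (-z) := by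
      rw [← Finset.sum_neg_distrib]
      refine Finset.sum_congr rfl fun g hg => ?_
      rw [(Finset.mem_filter.1 hg).2]; ring
    rw [e0, e1] at key
    linear_combination key
  have hT₀ : ∑ g ∈ F₀, χ g (-z) = 0 := by linear_combination (hT01 + hT01') / 2
  have hT₁ : ∑ g ∈ F₁, χ g (-z) = 0 := by linear_combination (hT01 - hT01') / 2
  -- main identity: ∑ g, lam g * χ g (-z) = n
  have hmain : ∑ g, (lam g : ℂ) * χ g (-z) = (n : ℂ) := by
    have e : ∀ g : G, (lam g : ℂ) * χ g (-z) = ∑ s ∈ S, χ g (s + -z) := by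
      intro g
      rw [hlam, Finset.sum_mul]
      exact Finset.sum_congr rfl fun s _ => (AddChar.map_add_eq_mul _ _ _).symm
    rw [Finset.sum_congr rfl fun g _ => e g, Finset.sum_comm]
    rw [Finset.sum_eq_single_of_mem z hzS]
    · simp only [add_neg_cancel]
      simp [hχ0, hn]
    · intro s hs hsz
      exact hsum _ (by intro h; exact hsz (by rwa [add_neg_eq_zero] at h))
  -- key identity
  have hkey : (n : ℂ) = ∑ g ∈ F₀, ((lam g : ℂ) - S.card) * χ g (-z)
      + ∑ g ∈ F₁, ((lam g : ℂ) - lam g₁) * χ g (-z) := by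
    have e0 : ∑ g ∈ F₀, ((lam g : ℂ) - S.card) * χ g (-z)
        = ∑ g ∈ F₀, (lam g : ℂ) * χ g (-z) - (S.card : ℂ) * ∑ g ∈ F₀, χ g (-z) := by
      rw [Finset.mul_sum, ← Finset.sum_sub_distrib]
      exact Finset.sum_congr rfl fun g _ => by ring
    have e1 : ∑ g ∈ F₁, ((lam g : ℂ) - lam g₁) * χ g (-z)
        = ∑ g ∈ F₁, (lam g : ℂ) * χ g (-z) - (lam g₁ : ℂ) * ∑ g ∈ F₁, χ g (-z) := by
      rw [Finset.mul_sum, ← Finset.sum_sub_distrib]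
      exact Finset.sum_congr rfl fun g _ => by ring
    rw [e0, e1, hT₀, hT₁, mul_zero, mul_zero, sub_zero, sub_zero, ← hsplit, hmain]
  -- divisibility facts
  have hdvd0 : ∀ g ∈ F₀, M ∣ (lam g - S.card) := by
    intro g hg
    have h1 : M ∣ (S.card : ℤ) - lam g :=
      (hM ▸ gcd_dvd_left M₀ M₁).trans (hM₀ ▸ Finset.gcd_dvd hg)
    simpa [neg_sub] using h1.neg_right
  have hdvd1 : ∀ g ∈ F₁, M ∣ (lam g - lam g₁) := by
    intro g hg
    have h1 : M ∣ lam g₁ - lam g :=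
      (hM ▸ gcd_dvd_right M₀ M₁).trans (hM₁ ▸ Finset.gcd_dvd hg)
    simpa [neg_sub] using h1.neg_right
  by_cases hMz : M = 0
  · -- then all differences are 0 and n = 0, contradiction
    exfalso
    have hz0' : ∀ g ∈ F₀, ((lam g : ℂ) - S.card) = 0 := by
      intro g hg
      have := hdvd0 g hg; rw [hMz] at this
      have h0 : lam g - (S.card : ℤ) = 0 := zero_dvd_iff.1 this
      exact_mod_cast congrArg (fun x : ℤ => (x : ℂ)) h0
    have hz1' : ∀ g ∈ F₁, ((lam g : ℂ) - lam g₁) = 0 := by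
      intro g hg
      have := hdvd1 g hg; rw [hMz] at this
      have h0 : lam g - lam g₁ = 0 := zero_dvd_iff.1 this
      exact_mod_cast congrArg (fun x : ℤ => (x : ℂ)) h0
    have hk0 : ∑ g ∈ F₀, ((lam g : ℂ) - S.card) * χ g (-z) = 0 :=
      Finset.sum_eq_zero fun g hg => by rw [hz0' g hg, zero_mul]
    have hk1 : ∑ g ∈ F₁, ((lam g : ℂ) - lam g₁) * χ g (-z) = 0 :=
      Finset.sum_eq_zero fun g hg => by rw [hz1' g hg, zero_mul]
    rw [hk0, hk1, add_zero] at hkey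
    have : (n : ℂ) ≠ 0 := Nat.cast_ne_zero.2 Fintype.card_ne_zero
    exact this hkey
  · -- each χ value is integral over ℤ
    have hpow : ∀ g w : G, (χ g w) ^ n = 1 := by
      intro g w
      rw [← AddChar.map_nsmul_eq_pow, hn, card_nsmul_eq_zero]
      exact AddChar.map_zero_eq_one _
    have hint : ∀ g w : G, (χ g w) ∈ integralClosure ℤ ℂ := by
      intro g w
      refine ⟨Polynomial.X ^ n - Polynomial.C 1, Polynomial.monic_X_pow_sub_C 1 Fintype.card_ne_zero, ?_⟩
      simp [Polynomial.eval₂_sub, hpow g w]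
    set α : ℂ := ∑ g ∈ F₀, (((lam g - S.card) / M : ℤ) : ℂ) * χ g (-z)
      + ∑ g ∈ F₁, (((lam g - lam g₁) / M : ℤ) : ℂ) * χ g (-z) with hα
    have hαint : α ∈ integralClosure ℤ ℂ := by
      refine Subalgebra.add_mem _ (Subalgebra.sum_mem _ fun g _ => ?_)
        (Subalgebra.sum_mem _ fun g _ => ?_) <;>
      exact Subalgebra.mul_mem _ (Subalgebra.intCast_mem _ _) (hint g (-z))
    have hMα : (M : ℂ) * α = (n : ℂ) := by
      rw [hα, mul_add, Finset.mul_sum, Finset.mul_sum, hkey]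
      congr 1 <;> refine Finset.sum_congr rfl fun g hg => ?_
      · rw [← mul_assoc, ← Int.cast_mul, Int.mul_ediv_cancel' (hdvd0 g hg)]
        push_cast
        ring
      · rw [← mul_assoc, ← Int.cast_mul, Int.mul_ediv_cancel' (hdvd1 g hg)]
        push_cast
        ring
    have hMC : (M : ℂ) ≠ 0 := Int.cast_ne_zero.2 hMz
    have hαeq : α = (((n : ℚ) / (M : ℚ) : ℚ) : ℂ) := by
      push_cast
      field_simp
      linear_combination hMα
    have hq : IsIntegral ℤ ((n : ℚ) / (M : ℚ)) := by
      have h1 : IsIntegral ℤ α := hαint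
      rw [hαeq] at h1
      refine (isIntegral_algHom_iff (algebraMap ℚ ℂ).toIntAlgHom
        (fun x y h => (algebraMap ℚ ℂ).injective h)).1 ?_
      convert h1 using 1
      rfl
    obtain ⟨m, hm⟩ := IsIntegrallyClosed.isIntegral_iff.1 hq
    refine ⟨m, ?_⟩
    have hmq : (m : ℚ) = (n : ℚ) / (M : ℚ) := hm
    have hMQ : (M : ℚ) ≠ 0 := Int.cast_ne_zero.2 hMz
    have : (M : ℚ) * m = (n : ℚ) := by
      rw [hmq]; field_simp
    exact_mod_cast this.symm
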